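/- Let N ≥ 3 be an odd integer and l an integer with 1 ≤ l ≤ (N−1)/2. Then Σ_{n=1}^{N-1} (−1)^n · ( sin(2nlπ/N) / sin(nπ/N) ) · ( sin(4nlπ/N) / sin(2nπ/N) ) = −(1/2)·3l·(3l−1) + (1/2)·l·(l−1) − l + ε, where ε = N·( 3l − (N+1)/2 + (1/2)(1−(−1)^{l−(N+1)/2}) ) if 3l > (N+1)/2, and ε = 0 otherwise. -/

import Mathlib

open Real Finset

-- telescoping geometric identity
lemma auxGeoF2 (w : ℂ) (hw : w ≠ 0) (m : ℕ) :
    (w⁻¹ - w) * ∑ j ∈ range m, w ^ ((m : ℤ) - 1 - 2 * j) =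
      w ^ (-(m : ℤ)) - w ^ (m : ℤ) := by
  have key : ∀ j ∈ range m,
      (w⁻¹ - w) * w ^ ((m : ℤ) - 1 - 2 * j) =
        (fun j : ℕ => w ^ ((m : ℤ) - 2 * j)) (j + 1) -
          (fun j : ℕ => w ^ ((m : ℤ) - 2 * j)) j := by
    intro j _
    have h1 : w ^ ((m : ℤ) - 2 * ((j:ℤ) + 1)) = w ^ ((m : ℤ) - 1 - 2 * j) * w⁻¹ := by
      rw [← zpow_sub_one₀ hw]; congr 1; ring
    have h2 : w ^ ((m : ℤ) - 2 * (j:ℤ)) = w ^ ((m : ℤ) - 1 - 2 * j) * w := by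
      rw [← zpow_add_one₀ hw]; congr 1; ring
    simp only []
    push_cast
    rw [h1, h2]
    ring
  rw [Finset.mul_sum, Finset.sum_congr rfl key, Finset.sum_range_sub
    (fun j : ℕ => w ^ ((m : ℤ) - 2 * j)) m]
  push_cast
  ring_nf

-- sin (m x) as sin x times a geometric sum
lemma sinEqSumF2 (x : ℂ) (m : ℕ) :
    Complex.sin ((m : ℂ) * x) =
      Complex.sin x * ∑ j ∈ range m, Complex.exp (x * Complex.I) ^ ((m : ℤ) - 1 - 2 * j) := by
  set w := Complex.exp (x * Complex.I) with hwdef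
  have hw : w ≠ 0 := Complex.exp_ne_zero _
  have hsin : Complex.sin x = (w⁻¹ - w) * Complex.I / 2 := by
    rw [Complex.sin, hwdef, ← Complex.exp_neg]; ring_nf
  have hsinm : Complex.sin ((m : ℂ) * x) = (w ^ (-(m:ℤ)) - w ^ (m:ℤ)) * Complex.I / 2 := by
    rw [Complex.sin]
    have e1 : Complex.exp (-((m:ℂ) * x) * Complex.I) = w ^ (-(m:ℤ)) := by
      rw [hwdef, ← Complex.exp_int_mul]; congr 1; push_cast; ring
    have e2 : Complex.exp ((m:ℂ) * x * Complex.I) = w ^ ((m:ℤ)) := by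
      rw [hwdef, ← Complex.exp_int_mul]; congr 1; push_cast; ring
    rw [e1, e2]
  rw [hsinm, hsin, ← auxGeoF2 w hw m]
  ring

lemma termEqF2 (N l n : ℕ) (hN : 0 < N)
    (hs1 : Complex.sin ((n:ℂ) * (π:ℂ) / N) ≠ 0)
    (hs2 : Complex.sin (2 * (n:ℂ) * (π:ℂ) / N) ≠ 0) :
    (-1:ℂ) ^ n * (Complex.sin (2 * (n:ℂ) * l * π / N) / Complex.sin ((n:ℂ) * π / N)) *
      (Complex.sin (4 * (n:ℂ) * l * π / N) / Complex.sin (2 * (n:ℂ) * π / N))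
    = ∑ j ∈ range (2*l), ∑ k ∈ range (2*l),
        Complex.exp ((((N:ℤ) + (2*l - 1 - 2*j) + (4*l - 2 - 4*k) : ℤ) : ℂ)
          * π * Complex.I / N) ^ n := by
  have hNC : (N:ℂ) ≠ 0 := Nat.cast_ne_zero.mpr hN.ne'
  have h1 : Complex.sin (2 * (n:ℂ) * l * π / N)
      = Complex.sin (((2*l : ℕ) : ℂ) * ((n:ℂ) * π / N)) := by
    congr 1; push_cast; ring
  have h2 : Complex.sin (4 * (n:ℂ) * l * π / N)
      = Complex.sin (((2*l : ℕ) : ℂ) * (2 * (n:ℂ) * π / N)) := by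
    congr 1; push_cast; ring
  rw [h1, sinEqSumF2, h2, sinEqSumF2, mul_div_cancel_left₀ _ hs1, mul_div_cancel_left₀ _ hs2]
  rw [Finset.mul_sum]
  conv_rhs => rw [Finset.sum_comm]
  refine Finset.sum_congr rfl (fun k _ => ?_)
  rw [Finset.mul_sum, Finset.sum_mul]
  refine Finset.sum_congr rfl (fun j _ => ?_)
  rw [show ((-1:ℂ)) = Complex.exp ((π:ℂ) * Complex.I) from Complex.exp_pi_mul_I.symm]
  rw [← Complex.exp_nat_mul, ← Complex.exp_int_mul, ← Complex.exp_int_mul,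
    ← Complex.exp_add, ← Complex.exp_add, ← Complex.exp_nat_mul]
  congr 1
  push_cast
  field_simp
  ring

lemma innerSumAuxF2 (N : ℕ) (hN : 1 ≤ N) (u : ℂ) (hu : u ^ N = 1) :
    ∑ n ∈ Icc 1 (N - 1), u ^ n = (if u = 1 then (N : ℂ) else 0) - 1 := by
  have hIcc : Icc 1 (N - 1) = Ico 1 N := by
    rw [← Finset.Ico_add_one_right_eq_Icc]; congr 1; omega
  rw [hIcc]
  by_cases h : u = 1
  · simp only [h, if_pos, one_pow, Finset.sum_const, Nat.card_Ico, smul_eq_mul, mul_one]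
    rw [nsmul_eq_mul, mul_one, Nat.cast_sub hN, Nat.cast_one]
  · rw [if_neg h]
    have h0 : ∑ n ∈ range N, u ^ n = 0 := by
      rw [geom_sum_eq h, hu]; simp
    have hsplit : ∑ n ∈ range N, u ^ n = u ^ 0 + ∑ n ∈ Ico 1 N, u ^ n := by
      rw [Finset.range_eq_Ico, Finset.sum_eq_sum_Ico_succ_bot (by omega)]
    rw [hsplit] at h0
    simp only [pow_zero] at h0
    linear_combination h0

lemma expEqOneIffF2 (N : ℕ) (hN : 0 < N) (E : ℤ) :
    Complex.exp ((E : ℂ) * Real.pi * Complex.I / N) = 1 ↔ (2 * (N : ℤ)) ∣ E := by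
  have hπ : (Real.pi : ℂ) ≠ 0 := Complex.ofReal_ne_zero.mpr Real.pi_ne_zero
  have hNne : (N : ℂ) ≠ 0 := Nat.cast_ne_zero.mpr (by omega)
  rw [Complex.exp_eq_one_iff]
  constructor
  · rintro ⟨k, hk⟩
    refine ⟨k, ?_⟩
    have h2 : (E : ℂ) = 2 * k * N := by
      field_simp at hk
      have hcan : (E : ℂ) * (Real.pi * Complex.I) = 2 * k * N * (Real.pi * Complex.I) := by
        linear_combination hk * (Real.pi * Complex.I)
      exact mul_right_cancel₀ (by simp [hπ, Complex.I_ne_zero]) hcan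
    have h3 : (E : ℂ) = ((2 * (N:ℤ) * k : ℤ) : ℂ) := by push_cast; linear_combination h2
    exact_mod_cast h3
  · rintro ⟨k, hk⟩
    refine ⟨k, ?_⟩
    rw [hk]
    push_cast
    field_simp

lemma sumIndicatorRangeF2 (m : ℕ) (t : ℤ) (c : ℂ) :
    (∑ j ∈ range m, if (j : ℤ) = t then c else 0) =
      if 0 ≤ t ∧ t < m then c else 0 := by
  induction m with
  | zero =>
      simp only [Finset.range_zero, Finset.sum_empty, Nat.cast_zero]
      rw [if_neg (by omega)]
  | succ m ih =>
      rw [Finset.sum_range_succ, ih]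
      split_ifs
      all_goals try ring
      all_goals exfalso
      all_goals omega

lemma blockSumF2 (N : ℕ) (hN : 0 < N) (E : ℤ) (P₁ P₂ : Prop) [Decidable P₁] [Decidable P₂]
    (hE : ∃ m : ℤ, E = 2 * m) (h1 : P₁ ↔ E = 0) (h2 : P₂ ↔ E = 2 * N)
    (hlb : -(2 * (N:ℤ)) < E) (hub : E < 4 * N) :
    ∑ n ∈ Icc 1 (N - 1), Complex.exp ((E:ℂ) * Real.pi * Complex.I / N) ^ n
      = ((if P₁ then (N:ℂ) else 0) + (if P₂ then (N:ℂ) else 0)) - 1 := by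
  obtain ⟨m, hm⟩ := hE
  have hNC : (N:ℂ) ≠ 0 := Nat.cast_ne_zero.mpr hN.ne'
  have hNpos : (0:ℤ) < N := by exact_mod_cast hN
  have hu : Complex.exp ((E:ℂ) * Real.pi * Complex.I / N) ^ N = 1 := by
    rw [← Complex.exp_nat_mul]
    have harg : (N:ℂ) * ((E:ℂ) * Real.pi * Complex.I / N) = (m:ℂ) * (2 * Real.pi * Complex.I) := by
      have hEc : (E:ℂ) = 2 * m := by exact_mod_cast hm
      field_simp [hEc]; linear_combination hEc
    rw [harg]
    exact Complex.exp_int_mul_two_pi_mul_I m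
  rw [innerSumAuxF2 N hN _ hu]
  by_cases hdvd : (2 * (N:ℤ)) ∣ E
  · rw [if_pos ((expEqOneIffF2 N hN E).mpr hdvd)]
    obtain ⟨q, hq⟩ := hdvd
    have hq0 : 0 ≤ q := by nlinarith
    have hq2 : q < 2 := by nlinarith
    have hq01 : q = 0 ∨ q = 1 := by omega
    rcases hq01 with h | h
    · subst h
      rw [if_pos (h1.mpr (by omega)), if_neg (fun hc => by have := h2.mp hc; omega)]
      ring
    · subst h
      rw [if_neg (fun hc => by have := h1.mp hc; omega), if_pos (h2.mpr (by omega))]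
      ring
  · rw [if_neg (fun hc => hdvd ((expEqOneIffF2 N hN E).mp hc))]
    rw [if_neg (fun hc => hdvd ⟨0, by have := h1.mp hc; omega⟩),
        if_neg (fun hc => hdvd ⟨1, by have := h2.mp hc; omega⟩)]
    ring

theorem F2_sum_closed_form (N l : ℕ) (hN : 3 ≤ N) (hNodd : Odd N)
    (hl1 : 1 ≤ l) (hl2 : l ≤ (N - 1) / 2) :
    ∑ n ∈ Finset.Icc 1 (N - 1),
      (-1 : ℝ) ^ n * (Real.sin (2 * n * l * Real.pi / N) / Real.sin (n * Real.pi / N)) *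
        (Real.sin (4 * n * l * Real.pi / N) / Real.sin (2 * n * Real.pi / N))
    = -(1 / 2) * (3 * (l : ℝ)) * (3 * (l : ℝ) - 1)
      + (1 / 2) * (l : ℝ) * ((l : ℝ) - 1)
      - l
      + (if 3 * l > (N + 1) / 2 then
          (N : ℝ) * (3 * (l : ℝ) - ((N : ℝ) + 1) / 2 +
            (1 / 2) * (1 - (-1 : ℝ) ^ ((l : ℤ) - (((N + 1) / 2 : ℕ) : ℤ))))
        else 0) := by
  obtain ⟨s', hs'⟩ := hNodd
  have hl2' : l ≤ s' := by omega
  have hNpos : 0 < N := by omega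
  have hNR : (0:ℝ) < N := by exact_mod_cast hNpos
  have hπ := Real.pi_pos
  -- nonvanishing of the sines
  have hsin1 : ∀ n : ℕ, 1 ≤ n → n ≤ N - 1 → Real.sin (n * π / N) ≠ 0 := by
    intro n h1 h2
    have hn0 : (0:ℝ) < n := by exact_mod_cast h1
    have hnN : (n:ℝ) < N := by exact_mod_cast (by omega : n < N)
    have hp : 0 < (n:ℝ) * π / N := by positivity
    have hlt : (n:ℝ) * π / N < π := by
      rw [div_lt_iff₀ hNR]; nlinarith
    exact ne_of_gt (Real.sin_pos_of_pos_of_lt_pi hp hlt)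
  have hsin2 : ∀ n : ℕ, 1 ≤ n → n ≤ N - 1 → Real.sin (2 * n * π / N) ≠ 0 := by
    intro n h1 h2
    have hn0 : (0:ℝ) < n := by exact_mod_cast h1
    rcases lt_or_gt_of_ne (show 2 * n ≠ N by omega) with hlt | hgt
    · have hnN : 2 * (n:ℝ) < N := by exact_mod_cast hlt
      have hp : 0 < 2 * (n:ℝ) * π / N := by positivity
      have hlt2 : 2 * (n:ℝ) * π / N < π := by
        rw [div_lt_iff₀ hNR]; nlinarith
      exact ne_of_gt (Real.sin_pos_of_pos_of_lt_pi hp hlt2)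
    · have hgt' : (N:ℝ) < 2 * n := by exact_mod_cast hgt
      have h2N : 2 * (n:ℝ) < 2 * N := by
        have : (n:ℝ) < N := by exact_mod_cast (by omega : n < N)
        linarith
      intro hx
      have h3 := Real.sin_sub_pi (2 * n * π / N)
      rw [hx, neg_zero] at h3
      have hp : 0 < 2 * (n:ℝ) * π / N - π := by
        rw [sub_pos, lt_div_iff₀ hNR]; nlinarith
      have hlt2 : 2 * (n:ℝ) * π / N - π < π := by
        rw [sub_lt_iff_lt_add, div_lt_iff₀ hNR]; nlinarith
      have := Real.sin_pos_of_pos_of_lt_pi hp hlt2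
      rw [h3] at this
      exact lt_irrefl _ this
  -- the main complex computation
  have main : (∑ n ∈ Finset.Icc 1 (N - 1),
      (-1 : ℝ) ^ n * (Real.sin (2 * n * l * Real.pi / N) / Real.sin (n * Real.pi / N)) *
        (Real.sin (4 * n * l * Real.pi / N) / Real.sin (2 * n * Real.pi / N)))
      = -4 * (l:ℝ)^2 + (N:ℝ) *
          (((2*l - (s'+l+1)/2 : ℕ) : ℝ) + (((3*l - s')/2 : ℕ) : ℝ)) := by
    apply Complex.ofReal_injective
    push_cast
    have hterm : ∀ n ∈ Finset.Icc 1 (N-1),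
        (-1:ℂ) ^ n * (Complex.sin (2 * (n:ℂ) * l * π / N) / Complex.sin ((n:ℂ) * π / N)) *
          (Complex.sin (4 * (n:ℂ) * l * π / N) / Complex.sin (2 * (n:ℂ) * π / N))
        = ∑ j ∈ range (2*l), ∑ k ∈ range (2*l),
            Complex.exp ((((N:ℤ) + (2*l - 1 - 2*j) + (4*l - 2 - 4*k) : ℤ) : ℂ)
              * π * Complex.I / N) ^ n := by
      intro n hn
      rw [Finset.mem_Icc] at hn
      have e1 : ((n:ℂ) * π / N) = ((n * π / N : ℝ) : ℂ) := by push_cast; ring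
      have e2 : (2 * (n:ℂ) * π / N) = ((2 * n * π / N : ℝ) : ℂ) := by push_cast; ring
      refine termEqF2 N l n hNpos ?_ ?_
      · rw [e1, ← Complex.ofReal_sin]
        exact Complex.ofReal_ne_zero.mpr (hsin1 n hn.1 hn.2)
      · rw [e2, ← Complex.ofReal_sin]
        exact Complex.ofReal_ne_zero.mpr (hsin2 n hn.1 hn.2)
    rw [Finset.sum_congr rfl hterm]
    rw [Finset.sum_comm]
    rw [Finset.sum_congr rfl (fun j _ => Finset.sum_comm)]
    have hblock : ∀ j ∈ range (2*l), ∀ k ∈ range (2*l),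
        ∑ n ∈ Finset.Icc 1 (N-1),
          Complex.exp ((((N:ℤ) + (2*l - 1 - 2*j) + (4*l - 2 - 4*k) : ℤ) : ℂ)
            * π * Complex.I / N) ^ n
        = ((if (j:ℤ) = (s':ℤ) + 3*l - 1 - 2*k then (N:ℂ) else 0) +
            (if (j:ℤ) = 3*(l:ℤ) - 2 - s' - 2*k then (N:ℂ) else 0)) - 1 := by
      intro j hj k hk
      rw [Finset.mem_range] at hj hk
      refine blockSumF2 N hNpos _ _ _ ⟨(s':ℤ) + 3*l - 1 - j - 2*k, by omega⟩
        (by constructor <;> (intro h; omega)) (by constructor <;> (intro h; omega))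
        (by omega) (by omega)
    rw [Finset.sum_congr rfl (fun j hj => Finset.sum_congr rfl (fun k hk => hblock j hj k hk))]
    simp only [Finset.sum_sub_distrib, Finset.sum_add_distrib, Finset.sum_const,
      Finset.card_range]
    have hsw1 : (∑ j ∈ range (2*l), ∑ k ∈ range (2*l),
        if (j:ℤ) = (s':ℤ) + 3*l - 1 - 2*(k:ℤ) then (N:ℂ) else 0)
        = ∑ k ∈ range (2*l), ∑ j ∈ range (2*l),
            if (j:ℤ) = (s':ℤ) + 3*l - 1 - 2*(k:ℤ) then (N:ℂ) else 0 := Finset.sum_comm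
    have hsw2 : (∑ j ∈ range (2*l), ∑ k ∈ range (2*l),
        if (j:ℤ) = 3*(l:ℤ) - 2 - s' - 2*(k:ℤ) then (N:ℂ) else 0)
        = ∑ k ∈ range (2*l), ∑ j ∈ range (2*l),
            if (j:ℤ) = 3*(l:ℤ) - 2 - s' - 2*(k:ℤ) then (N:ℂ) else 0 := Finset.sum_comm
    rw [hsw1, hsw2]
    simp only [sumIndicatorRangeF2]
    rw [← Finset.sum_filter, ← Finset.sum_filter]
    have hf1 : (range (2*l)).filter
        (fun k : ℕ => 0 ≤ (s':ℤ) + 3*l - 1 - 2*(k:ℤ) ∧ (s':ℤ) + 3*l - 1 - 2*(k:ℤ) < ((2*l : ℕ) : ℤ))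
        = Finset.Ico ((s'+l+1)/2) (2*l) := by
      ext k
      simp only [Finset.mem_filter, Finset.mem_range, Finset.mem_Ico]
      constructor
      · rintro ⟨h1, h2, h3⟩; push_cast at h2 h3; omega
      · rintro ⟨h1, h2⟩
        refine ⟨by omega, by push_cast; omega, by push_cast; omega⟩
    have hf2 : (range (2*l)).filter
        (fun k : ℕ => 0 ≤ 3*(l:ℤ) - 2 - s' - 2*(k:ℤ) ∧ 3*(l:ℤ) - 2 - s' - 2*(k:ℤ) < ((2*l : ℕ) : ℤ))
        = Finset.range ((3*l - s')/2) := by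
      ext k
      simp only [Finset.mem_filter, Finset.mem_range]
      constructor
      · rintro ⟨h1, h2, h3⟩; push_cast at h2 h3; omega
      · intro h1
        refine ⟨by omega, by push_cast; omega, by push_cast; omega⟩
    rw [hf1, hf2, Finset.sum_const, Finset.sum_const, Nat.card_Ico, Finset.card_range]
    simp only [nsmul_eq_mul, smul_eq_mul, mul_one]
    push_cast
    ring
  rw [main]
  -- now the purely arithmetic finish
  have hhalf : ((N + 1) / 2 : ℕ) = s' + 1 := by omega
  rw [hhalf]
  have hcastexp : (((s' + 1 : ℕ)) : ℤ) = (s' : ℤ) + 1 := by push_cast; ring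
  rw [hcastexp]
  by_cases hcase : 3 * l > s' + 1
  · rw [if_pos hcase]
    have hNr : (N:ℝ) = 2 * (s':ℝ) + 1 := by exact_mod_cast hs'
    rcases Nat.even_or_odd (l + s') with he | ho
    · -- l + s' even : exponent l - s' - 1 is odd, sign = -1, delta = 1
      obtain ⟨m, hm⟩ := he
      have hodd : Odd ((l:ℤ) - ((s':ℤ) + 1)) := ⟨(m:ℤ) - s' - 1, by push_cast; omega⟩
      rw [Odd.neg_one_zpow hodd]
      have hc : (2*l - (s'+l+1)/2) + ((3*l - s')/2) + s' = 3*l := by omega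
      have hcR : ((2*l - (s'+l+1)/2 : ℕ) : ℝ) + (((3*l - s')/2 : ℕ) : ℝ)
          = 3*(l:ℝ) - s' := by
        have := congrArg (Nat.cast : ℕ → ℝ) hc
        push_cast at this
        linarith
      rw [hcR, hNr]
      ring
    · -- l + s' odd : exponent even, sign = 1, delta = 0
      obtain ⟨m, hm⟩ := ho
      have heven : Even ((l:ℤ) - ((s':ℤ) + 1)) := ⟨(m:ℤ) - s', by push_cast; omega⟩
      rw [Even.neg_one_zpow heven]
      have hc : (2*l - (s'+l+1)/2) + ((3*l - s')/2) + s' + 1 = 3*l := by omega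
      have hcR : ((2*l - (s'+l+1)/2 : ℕ) : ℝ) + (((3*l - s')/2 : ℕ) : ℝ)
          = 3*(l:ℝ) - s' - 1 := by
        have := congrArg (Nat.cast : ℕ → ℝ) hc
        push_cast at this
        linarith
      rw [hcR, hNr]
      ring
  · rw [if_neg hcase]
    have hc1 : (2*l - (s'+l+1)/2 : ℕ) = 0 := by omega
    have hc2 : ((3*l - s')/2 : ℕ) = 0 := by omega
    rw [hc1, hc2]
    push_cast
    ring
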